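/- Let P be a finite set of pairwise distinct keys in {0,1}^256 with |P| ≥ 20, and for any key x let GetClosestPeers(x) denote the set of the 20 elements of P with smallest XOR distance to x (this set is uniquely determined, since the XOR distances from distinct peer IDs to a fixed key are pairwise distinct). Define FindByCPL(key, minCPL) recursively as follows: let S := GetClosestPeers(key) and let CPL := min_{p ∈ S} cpl(p, key); while CPL ≥ minCPL, let qkey be the key obtained from key by flipping bit number CPL (bits indexed from 0 at the most significant end), update S := S ∪ FindByCPL(qkey, CPL+1), and then decrement CPL by 1; finally, remove from S all elements whose common prefix length with key is less than minCPL, and return S. Then for every key and every minCPL, FindByCPL(key, minCPL) terminates and returns exactly the set of all elements of P whose common prefix length with key is at least minCPL. -/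

import Mathlib

/-- The common prefix length of two keys in `{0,1}^n`: the number of leading bits
(indexed from the most significant bit) on which they agree. -/
def cpl {n : ℕ} (x y : BitVec n) : ℕ :=
  ((List.range n).takeWhile (fun i => x.getMsbD i == y.getMsbD i)).length

/-- The XOR distance between two keys: their bitwise XOR interpreted as a natural number. -/
def xorDist {n : ℕ} (x y : BitVec n) : ℕ := (x ^^^ y).toNat

/-- Flip bit number `i` of `x`, where bits are indexed from 0 at the most significant end. -/
def flipMsb (x : BitVec 256) (i : ℕ) : BitVec 256 :=
  x ^^^ BitVec.twoPow 256 (255 - i)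

/-- `min_{p ∈ S} cpl(p, key)` (256, the maximal possible value, for `S = ∅`). -/
def minCpl (S : Finset (BitVec 256)) (key : BitVec 256) : ℕ :=
  S.fold min 256 (fun p => cpl p key)

lemma minCpl_le (S : Finset (BitVec 256)) (key : BitVec 256) : minCpl S key ≤ 256 :=
  Finset.fold_min_le 256 |>.mpr (Or.inl le_rfl)

/-- `FindByCPL(key, minCPL)` (Algorithm 2): let `S := GetClosestPeers(key)` and
`CPL := min_{p ∈ S} cpl(p, key)`; while `CPL ≥ minCPL`, flip bit number `CPL` of `key` to
obtain `qkey`, add `FindByCPL(qkey, CPL+1)` to `S`, and decrement `CPL`; finally keep only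
the elements of `S` whose common prefix length with `key` is at least `minCPL`.
(The union over the loop iterations `CPL = minCPL, ..., min_{p ∈ S₀} cpl(p, key)` is
expressed as a fold over that range of values.) -/
def findByCPL (GCP : BitVec 256 → Finset (BitVec 256)) (key : BitVec 256) (minCPL : ℕ) :
    Finset (BitVec 256) :=
  ((((List.range' minCPL (minCpl (GCP key) key + 1 - minCPL)).attach.map
      (fun c => findByCPL GCP (flipMsb key c.1) (c.1 + 1))).foldl (· ∪ ·)
    (GCP key)).filter (fun p => minCPL ≤ cpl p key))
termination_by 257 - minCPL
decreasing_by
  have hc := List.mem_range'_1.mp c.2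
  have h256 := minCpl_le (GCP key) key
  omega


/-! ### Auxiliary lemmas -/

lemma takeWhile_getElem_sat {α : Type*} (p : α → Bool) (l : List α) (i : ℕ)
    (h : i < (l.takeWhile p).length) (h2 : i < l.length) : p l[i] = true := by
  have hpre := List.takeWhile_prefix (l := l) p
  have := List.mem_takeWhile_imp (l := l) (p := p) (x := (l.takeWhile p)[i])
    (List.getElem_mem h)
  rwa [hpre.getElem h] at this

lemma takeWhile_getElem_fail {α : Type*} (p : α → Bool) (l : List α)
    (h : (l.takeWhile p).length < l.length) : p (l[(l.takeWhile p).length]'h) = false := by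
  induction l with
  | nil => simp at h
  | cons a t ih =>
    by_cases hp : p a = true
    · simp only [List.takeWhile_cons, hp, if_true, List.length_cons] at h ⊢
      simpa using ih (by simpa using h)
    · simp only [List.takeWhile_cons, Bool.not_eq_true] at hp ⊢
      simp [hp]

lemma cpl_le {n : ℕ} (x y : BitVec n) : cpl x y ≤ n := by
  have := (List.takeWhile_prefix (l := List.range n)
    (fun i => x.getMsbD i == y.getMsbD i)).length_le
  simpa [cpl] using this

lemma agree_of_lt_cpl {n : ℕ} {x y : BitVec n} {i : ℕ} (h : i < cpl x y) :
    x.getMsbD i = y.getMsbD i := by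
  have hn : i < n := lt_of_lt_of_le h (cpl_le x y)
  have := takeWhile_getElem_sat (fun i => x.getMsbD i == y.getMsbD i) (List.range n) i
    (by simpa [cpl] using h) (by simpa using hn)
  simpa using this

lemma disagree_at_cpl {n : ℕ} {x y : BitVec n} (h : cpl x y < n) :
    x.getMsbD (cpl x y) ≠ y.getMsbD (cpl x y) := by
  have := takeWhile_getElem_fail (fun i => x.getMsbD i == y.getMsbD i) (List.range n)
    (by simpa [cpl] using h)
  simp only [List.getElem_range] at this
  simpa [cpl] using this

lemma le_cpl_of_agree {n : ℕ} {x y : BitVec n} {k : ℕ} (hk : k ≤ n)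
    (h : ∀ i < k, x.getMsbD i = y.getMsbD i) : k ≤ cpl x y := by
  by_contra hlt
  push_neg at hlt
  exact disagree_at_cpl (lt_of_lt_of_le hlt hk) (h _ hlt)

lemma eq_of_cpl_eq {n : ℕ} {x y : BitVec n} (h : n ≤ cpl x y) : x = y :=
  BitVec.eq_of_getMsbD_eq fun i hi => agree_of_lt_cpl (lt_of_lt_of_le hi h)

lemma xorDist_lt_of_cpl_lt {n : ℕ} {x y k : BitVec n} (h : cpl y k < cpl x k) :
    xorDist x k < xorDist y k := by
  set c := cpl y k with hc
  have hcn : c < n := lt_of_lt_of_le h (cpl_le x k)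
  apply Nat.lt_of_testBit (n - 1 - c)
  · have hx : x.getMsbD c = k.getMsbD c := agree_of_lt_cpl h
    have : (x ^^^ k).getMsbD c = false := by
      rw [BitVec.getMsbD_xor, hx]; simp
    rw [BitVec.getMsbD_eq_getLsbD] at this
    simp only [hcn, decide_true, Bool.true_and] at this
    exact this
  · have hy : y.getMsbD c ≠ k.getMsbD c := disagree_at_cpl (hc ▸ hcn)
    have : (y ^^^ k).getMsbD c = true := by
      rw [BitVec.getMsbD_xor]
      cases hy' : y.getMsbD c <;> cases hk' : k.getMsbD c <;> simp_all
    rw [BitVec.getMsbD_eq_getLsbD] at this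
    simp only [hcn, decide_true, Bool.true_and] at this
    exact this
  · intro j hj
    by_cases hjn : j < n
    · have hi : n - 1 - j < c := by omega
      have hxk : (x ^^^ k).getMsbD (n - 1 - j) = false := by
        rw [BitVec.getMsbD_xor, agree_of_lt_cpl (lt_trans hi h)]; simp
      have hyk : (y ^^^ k).getMsbD (n - 1 - j) = false := by
        rw [BitVec.getMsbD_xor, agree_of_lt_cpl (hc ▸ hi)]; simp
      rw [BitVec.getMsbD_eq_getLsbD] at hxk hyk
      have hj' : n - 1 - (n - 1 - j) = j := by omega
      have hlt : n - 1 - j < n := by omega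
      simp only [hj', hlt, decide_true, Bool.true_and] at hxk hyk
      show ((x ^^^ k).toNat).testBit j = ((y ^^^ k).toNat).testBit j
      rw [← BitVec.getLsbD, ← BitVec.getLsbD, hxk, hyk]
    · have h1 : ((x ^^^ k).toNat).testBit j = false :=
        Nat.testBit_lt_two_pow (lt_of_lt_of_le (x ^^^ k).isLt
          (Nat.pow_le_pow_right (by norm_num) (by omega)))
      have h2 : ((y ^^^ k).toNat).testBit j = false :=
        Nat.testBit_lt_two_pow (lt_of_lt_of_le (y ^^^ k).isLt
          (Nat.pow_le_pow_right (by norm_num) (by omega)))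
      show ((x ^^^ k).toNat).testBit j = ((y ^^^ k).toNat).testBit j
      rw [h1, h2]

lemma flip_getMsbD (key : BitVec 256) {j i : ℕ} (hj : j ≤ 255) (hi : i < 256) :
    (flipMsb key j).getMsbD i = if i = j then !(key.getMsbD i) else key.getMsbD i := by
  unfold flipMsb
  rw [BitVec.getMsbD_xor, BitVec.getMsbD_eq_getLsbD (BitVec.twoPow 256 (255 - j)),
    BitVec.getLsbD_twoPow]
  have h255 : 255 - j < 256 := by omega
  by_cases hij : i = j
  · have h1 : 255 - j = 256 - 1 - i := by omega
    simp [hij, hi, h1, Bool.xor_comm, show j < 256 by omega, show 256 - 1 - i < 256 by omega]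
  · have h1 : ¬ (255 - j = 256 - 1 - i) := by omega
    simp [hij, hi, h1, h255]

lemma cpl_flip {key p : BitVec 256} {j : ℕ} (hj : j ≤ 255) :
    cpl p key = j ↔ j + 1 ≤ cpl p (flipMsb key j) := by
  constructor
  · intro h
    apply le_cpl_of_agree (by omega)
    intro i hi
    rcases Nat.lt_or_ge i j with hij | hij
    · rw [flip_getMsbD key hj (by omega), if_neg (by omega)]
      exact agree_of_lt_cpl (h ▸ hij)
    · have hij' : i = j := by omega
      subst hij'
      rw [flip_getMsbD key hj (by omega), if_pos rfl]
      have := disagree_at_cpl (x := p) (y := key) (by omega)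
      rw [h] at this
      cases hp : p.getMsbD i <;> cases hk : key.getMsbD i <;> simp_all
  · intro h
    have hagree : ∀ i < j, p.getMsbD i = key.getMsbD i := by
      intro i hi
      have := agree_of_lt_cpl (x := p) (y := flipMsb key j) (i := i) (by omega)
      rwa [flip_getMsbD key hj (by omega), if_neg (by omega)] at this
    have hge : j ≤ cpl p key := le_cpl_of_agree (by omega) hagree
    have hdis : p.getMsbD j ≠ key.getMsbD j := by
      have := agree_of_lt_cpl (x := p) (y := flipMsb key j) (i := j) (by omega)
      rw [flip_getMsbD key hj (by omega), if_pos rfl] at this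
      cases hp : p.getMsbD j <;> cases hk : key.getMsbD j <;> simp_all
    by_contra hne
    have hlt : j < cpl p key := lt_of_le_of_ne hge (Ne.symm (by omega))
    exact hdis (agree_of_lt_cpl hlt)

lemma minCpl_le_of_mem {S : Finset (BitVec 256)} {key p : BitVec 256} (hp : p ∈ S) :
    minCpl S key ≤ cpl p key :=
  Finset.fold_min_le _ |>.mpr (Or.inr ⟨p, hp, le_rfl⟩)

lemma minCpl_attained (S : Finset (BitVec 256)) (key : BitVec 256) :
    minCpl S key = 256 ∨ ∃ p ∈ S, minCpl S key = cpl p key := by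
  classical
  induction S using Finset.induction_on with
  | empty => left; rfl
  | insert _ _ ha ih =>
    rename_i a s
    unfold minCpl at ih ⊢
    rw [Finset.fold_insert ha]
    rcases le_total (cpl a key) (s.fold min 256 fun p => cpl p key) with h | h
    · right
      exact ⟨a, Finset.mem_insert_self a s, min_eq_left h⟩
    · rw [min_eq_right h]
      rcases ih with h1 | ⟨p, hp, h2⟩
      · left; exact h1
      · right; exact ⟨p, Finset.mem_insert_of_mem hp, h2⟩

lemma mem_foldl_union {α : Type*} [DecidableEq α] (L : List (Finset α)) (init : Finset α)
    (x : α) : x ∈ L.foldl (· ∪ ·) init ↔ x ∈ init ∨ ∃ s ∈ L, x ∈ s := by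
  induction L generalizing init with
  | nil => simp
  | cons a t ih =>
    simp only [List.foldl_cons, ih, Finset.mem_union, List.mem_cons]
    constructor
    · rintro ((h | h) | ⟨s, hs, hx⟩)
      · exact Or.inl h
      · exact Or.inr ⟨a, Or.inl rfl, h⟩
      · exact Or.inr ⟨s, Or.inr hs, hx⟩
    · rintro (h | ⟨s, (rfl | hs), hx⟩)
      · exact Or.inl (Or.inl h)
      · exact Or.inl (Or.inr hx)
      · exact Or.inr ⟨s, hs, hx⟩

lemma minCpl_le_255 {S : Finset (BitVec 256)} {key : BitVec 256} (h : 2 ≤ S.card) :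
    minCpl S key ≤ 255 := by
  obtain ⟨a, ha, b, hb, hab⟩ := Finset.one_lt_card.mp (show 1 < S.card by omega)
  rcases eq_or_ne a key with heq | hak
  · have hb' : cpl b key ≤ 255 := by
      by_contra hc
      exact hab (heq.trans (eq_of_cpl_eq (x := b) (y := key) (by omega)).symm)
    exact le_trans (minCpl_le_of_mem hb) hb'
  · have ha' : cpl a key ≤ 255 := by
      by_contra hc
      exact hak (eq_of_cpl_eq (x := a) (y := key) (by omega))
    exact le_trans (minCpl_le_of_mem ha) ha'

section Main
variable (P : Finset (BitVec 256)) (GCP : BitVec 256 → Finset (BitVec 256))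

lemma cpl_le_minCpl_of_not_mem
    (hcard : ∀ x, (GCP x).card = 20)
    (hclosest : ∀ x, ∀ p ∈ GCP x, ∀ q ∈ P, q ∉ GCP x → xorDist p x < xorDist q x)
    {key q : BitVec 256} (hqP : q ∈ P) (hqG : q ∉ GCP key) :
    cpl q key ≤ minCpl (GCP key) key := by
  rcases minCpl_attained (GCP key) key with h256 | ⟨p, hp, hm⟩
  · have := minCpl_le_255 (S := GCP key) (key := key) (by rw [hcard]; omega)
    omega
  · by_contra hc
    push_neg at hc
    have h1 : xorDist p key < xorDist q key := hclosest key p hp q hqP hqG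
    have h2 : xorDist q key < xorDist p key := xorDist_lt_of_cpl_lt (by omega)
    omega

lemma findByCPL_step
    (hsub : ∀ x, GCP x ⊆ P)
    (hcard : ∀ x, (GCP x).card = 20)
    (hclosest : ∀ x, ∀ p ∈ GCP x, ∀ q ∈ P, q ∉ GCP x → xorDist p x < xorDist q x)
    (key : BitVec 256) (c : ℕ)
    (hrec : ∀ j ∈ List.range' c (minCpl (GCP key) key + 1 - c),
      findByCPL GCP (flipMsb key j) (j + 1)
        = P.filter (fun p => j + 1 ≤ cpl p (flipMsb key j))) :
    findByCPL GCP key c = P.filter (fun p => c ≤ cpl p key) := by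
  have hm255 : minCpl (GCP key) key ≤ 255 :=
    minCpl_le_255 (by rw [hcard]; omega)
  rw [findByCPL]
  ext q
  simp only [Finset.mem_filter, mem_foldl_union, List.mem_map, List.mem_attach, true_and,
    Subtype.exists]
  constructor
  · rintro ⟨hG | ⟨s, ⟨j, hj, rfl⟩, hq⟩, hcq⟩
    · exact ⟨hsub key hG, hcq⟩
    · rw [hrec j hj, Finset.mem_filter] at hq
      exact ⟨hq.1, hcq⟩
  · rintro ⟨hqP, hcq⟩
    refine ⟨?_, hcq⟩
    by_cases hqG : q ∈ GCP key
    · exact Or.inl hqG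
    · have hle : cpl q key ≤ minCpl (GCP key) key :=
        cpl_le_minCpl_of_not_mem P GCP hcard hclosest hqP hqG
      have hj : cpl q key ∈ List.range' c (minCpl (GCP key) key + 1 - c) :=
        List.mem_range'_1.mpr ⟨hcq, by omega⟩
      refine Or.inr ⟨_, ⟨cpl q key, hj, rfl⟩, ?_⟩
      rw [hrec _ hj, Finset.mem_filter]
      exact ⟨hqP, (cpl_flip (by omega)).mp rfl⟩

lemma findByCPL_aux
    (hsub : ∀ x, GCP x ⊆ P)
    (hcard : ∀ x, (GCP x).card = 20)
    (hclosest : ∀ x, ∀ p ∈ GCP x, ∀ q ∈ P, q ∉ GCP x → xorDist p x < xorDist q x) :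
    ∀ k c key, 257 - c ≤ k →
      findByCPL GCP key c = P.filter (fun p => c ≤ cpl p key) := by
  intro k
  induction k with
  | zero =>
    intro c key hk
    apply findByCPL_step P GCP hsub hcard hclosest
    intro j hj
    have := List.mem_range'_1.mp hj
    have := minCpl_le (GCP key) key
    omega
  | succ n ih =>
    intro c key hk
    apply findByCPL_step P GCP hsub hcard hclosest
    intro j hj
    have h1 := List.mem_range'_1.mp hj
    have h2 := minCpl_le (GCP key) key
    exact ih (j + 1) (flipMsb key j) (by omega)

end Main

/-- Theorem 1: if `P` is a finite set of keys with `|P| ≥ 20` and `GetClosestPeers(x)`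
returns, for every key `x`, the set of the 20 elements of `P` closest to `x` in XOR
distance, then `FindByCPL(key, minCPL)` (which terminates, being a total function defined
by well-founded recursion) returns exactly the set of all elements of `P` whose common
prefix length with `key` is at least `minCPL`. -/
theorem findByCPL_correct (P : Finset (BitVec 256)) (hP : 20 ≤ P.card)
    (GCP : BitVec 256 → Finset (BitVec 256))
    (hsub : ∀ x, GCP x ⊆ P)
    (hcard : ∀ x, (GCP x).card = 20)
    (hclosest : ∀ x, ∀ p ∈ GCP x, ∀ q ∈ P, q ∉ GCP x → xorDist p x < xorDist q x)
    (key : BitVec 256) (minCPL : ℕ) :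
    findByCPL GCP key minCPL = P.filter (fun p => minCPL ≤ cpl p key) := by
  exact findByCPL_aux P GCP hsub hcard hclosest (257 - minCPL) minCPL key le_rfl
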